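/- Let (φ_k)_{k≥1} be a real-valued martingale difference sequence adapted to a filtration (F_k)_{k≥1}, let C > 0, and let 0 < δ ≤ 1/6 be such that |φ_k| ≤ (C/2)·log(k/δ) almost surely for every k. Then with probability at least 1 − 4δ, for every positive integer k, |∑_{i=1}^k φ_i| ≤ C·√k·(log(k/δ))². -/

import Mathlib

open MeasureTheory ProbabilityTheory

open Real in
lemma aux_exp_le_cosh_add {b x : ℝ} (t : ℝ) (hb : 0 < b) (hx : |x| ≤ b) :
    Real.exp (t * x) ≤ Real.cosh (t * b) + Real.sinh (t * b) / b * x := by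
  obtain ⟨hx1, hx2⟩ := abs_le.mp hx
  have h := convexOn_exp.2 (Set.mem_univ (t * (-b))) (Set.mem_univ (t * b))
    (show (0:ℝ) ≤ (b - x) / (2 * b) by apply div_nonneg <;> linarith)
    (show (0:ℝ) ≤ (b + x) / (2 * b) by apply div_nonneg <;> linarith)
    (show (b - x) / (2 * b) + (b + x) / (2 * b) = 1 by field_simp; ring)
  simp only [smul_eq_mul] at h
  have hxy : (b - x) / (2 * b) * (t * -b) + (b + x) / (2 * b) * (t * b) = t * x := by
    field_simp; ring
  rw [hxy] at h
  refine h.trans (le_of_eq ?_)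
  rw [Real.cosh_eq, Real.sinh_eq, mul_neg, Real.exp_neg]
  field_simp
  ring

lemma aux_int_exp {Ω : Type*} {m0 : MeasurableSpace Ω} {μ : Measure Ω} [IsProbabilityMeasure μ]
    {f : Ω → ℝ} (hf : AEStronglyMeasurable f μ) {B : ℝ} (hB : ∀ᵐ ω ∂μ, |f ω| ≤ B) (t : ℝ) :
    Integrable (fun ω => Real.exp (t * f ω)) μ := by
  refine Integrable.mono' (integrable_const (Real.exp (|t| * B))) ?_ ?_
  · exact Real.continuous_exp.comp_aestronglyMeasurable (hf.const_mul t)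
  · filter_upwards [hB] with ω hω
    rw [Real.norm_eq_abs, abs_of_pos (Real.exp_pos _)]
    apply Real.exp_le_exp.2
    calc t * f ω ≤ |t * f ω| := le_abs_self _
      _ = |t| * |f ω| := abs_mul _ _
      _ ≤ |t| * B := mul_le_mul_of_nonneg_left hω (abs_nonneg t)

lemma aux_int_bdd {Ω : Type*} {m0 : MeasurableSpace Ω} {μ : Measure Ω} [IsProbabilityMeasure μ]
    {f : Ω → ℝ} (hf : AEStronglyMeasurable f μ) {B : ℝ} (hB : ∀ᵐ ω ∂μ, |f ω| ≤ B) :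
    Integrable f μ := by
  refine Integrable.mono' (integrable_const B) hf ?_
  filter_upwards [hB] with ω hω using by rwa [Real.norm_eq_abs]

lemma aux_mgf_bound {Ω : Type*} {m0 : MeasurableSpace Ω} (μ : Measure Ω) [IsProbabilityMeasure μ]
    (F : Filtration ℕ m0) (ψ : ℕ → Ω → ℝ) {b : ℝ} (t : ℝ) (hb : 0 < b)
    (hadapted : ∀ k, 1 ≤ k → StronglyMeasurable[F k] (ψ k))
    (hmds : ∀ k, 1 ≤ k → μ[ψ (k + 1) | F k] =ᵐ[μ] 0)
    (n : ℕ) (hbound : ∀ i, 2 ≤ i → i ≤ n → ∀ᵐ ω ∂μ, |ψ i ω| ≤ b) :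
    ∫ ω, Real.exp (t * ∑ i ∈ Finset.Icc 2 n, ψ i ω) ∂μ ≤ Real.cosh (t * b) ^ (n - 1) := by
  have hTmeas : ∀ m : ℕ, StronglyMeasurable[F m] (fun ω => ∑ i ∈ Finset.Icc 2 m, ψ i ω) := by
    intro m
    apply Finset.stronglyMeasurable_fun_sum
    intro i hi
    rw [Finset.mem_Icc] at hi
    exact (hadapted i (by omega)).mono (F.mono hi.2)
  have key : ∀ m : ℕ, m ≤ n →
      ∫ ω, Real.exp (t * ∑ i ∈ Finset.Icc 2 m, ψ i ω) ∂μ ≤ Real.cosh (t * b) ^ (m - 1) := by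
    intro m
    induction m with
    | zero => intro _; simp
    | succ m ih =>
      intro hm1
      by_cases hm0 : m = 0
      · subst hm0
        have : Finset.Icc 2 1 = (∅ : Finset ℕ) := by decide
        simp [this]
      have hm : 1 ≤ m := by omega
      set T := fun ω => ∑ i ∈ Finset.Icc 2 m, ψ i ω with hT
      set X := fun ω => Real.exp (t * T ω) with hX
      set Y := fun ω => Real.exp (t * ψ (m + 1) ω) with hY
      have hψmeas : StronglyMeasurable (ψ (m + 1)) :=
        (hadapted (m + 1) (by omega)).mono (F.le (m + 1))
      have hψbd := hbound (m + 1) (by omega) hm1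
      have hψint : Integrable (ψ (m + 1)) μ := aux_int_bdd hψmeas.aestronglyMeasurable hψbd
      have hTbd : ∀ᵐ ω ∂μ, |T ω| ≤ (m : ℝ) * b := by
        have hall : ∀ᵐ ω ∂μ, ∀ i ∈ Finset.Icc 2 m, |ψ i ω| ≤ b := by
          rw [Finset.eventually_all]
          intro i hi
          rw [Finset.mem_Icc] at hi
          exact hbound i hi.1 (by omega)
        filter_upwards [hall] with ω hω
        calc |T ω| ≤ ∑ i ∈ Finset.Icc 2 m, |ψ i ω| := Finset.abs_sum_le_sum_abs _ _
          _ ≤ ∑ _i ∈ Finset.Icc 2 m, b := Finset.sum_le_sum hω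
          _ = ((Finset.Icc 2 m).card : ℝ) * b := by rw [Finset.sum_const, nsmul_eq_mul]
          _ ≤ (m : ℝ) * b := by
              apply mul_le_mul_of_nonneg_right _ hb.le
              rw [Nat.card_Icc]
              exact_mod_cast Nat.le_of_lt_succ (by omega)
      have hsum : Finset.Icc 2 (m + 1) = insert (m + 1) (Finset.Icc 2 m) := by
        ext x; simp only [Finset.mem_Icc, Finset.mem_insert]; omega
      have hnotmem : m + 1 ∉ Finset.Icc 2 m := by simp [Finset.mem_Icc]
      have hXY : (fun ω => Real.exp (t * ∑ i ∈ Finset.Icc 2 (m + 1), ψ i ω))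
          = fun ω => X ω * Y ω := by
        funext ω
        rw [hsum, Finset.sum_insert hnotmem, mul_add, Real.exp_add]
        exact mul_comm _ _
      have hXm : StronglyMeasurable[F m] X :=
        Real.continuous_exp.comp_stronglyMeasurable ((hTmeas m).const_mul t)
      have hXint : Integrable X μ :=
        aux_int_exp ((hTmeas m).mono (F.le m)).aestronglyMeasurable hTbd t
      have hYint : Integrable Y μ := aux_int_exp hψmeas.aestronglyMeasurable hψbd t
      have hXYint : Integrable (X * Y) μ := by
        have h1 : Integrable (fun ω => Real.exp (t * (T ω + ψ (m + 1) ω))) μ := by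
          refine aux_int_exp (((hTmeas m).mono (F.le m)).add hψmeas).aestronglyMeasurable
            (B := (m : ℝ) * b + b) ?_ t
          filter_upwards [hTbd, hψbd] with ω h1 h2
          calc |T ω + ψ (m + 1) ω| ≤ |T ω| + |ψ (m + 1) ω| := abs_add_le _ _
            _ ≤ (m : ℝ) * b + b := add_le_add h1 h2
        refine h1.congr (Filter.Eventually.of_forall fun ω => ?_)
        simp only [Pi.mul_apply, hX, hY]
        rw [mul_add, Real.exp_add]
      have hpull := condExp_mul_of_stronglyMeasurable_left hXm hXYint hYint
      have hcondY : μ[Y | F m] ≤ᵐ[μ] fun _ => Real.cosh (t * b) := by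
        have hle : Y ≤ᵐ[μ] fun ω => Real.cosh (t * b) + Real.sinh (t * b) / b * ψ (m + 1) ω := by
          filter_upwards [hψbd] with ω hω using aux_exp_le_cosh_add t hb hω
        have hint2 : Integrable
            (fun ω => Real.cosh (t * b) + Real.sinh (t * b) / b * ψ (m + 1) ω) μ :=
          (integrable_const _).add (hψint.const_mul _)
        refine (condExp_mono hYint hint2 hle).trans ?_
        have heq : (fun ω => Real.cosh (t * b) + Real.sinh (t * b) / b * ψ (m + 1) ω)
            = (fun _ => Real.cosh (t * b)) + (Real.sinh (t * b) / b) • ψ (m + 1) := by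
          funext ω; simp [smul_eq_mul]
        rw [heq]
        have h2 := condExp_add (μ := μ) (m := F m)
          (integrable_const (Real.cosh (t * b))) (hψint.smul (Real.sinh (t * b) / b))
        have h3 := condExp_smul (μ := μ) (m := F m) (Real.sinh (t * b) / b) (ψ (m + 1))
        have h4 := condExp_const (μ := μ) (F.le m) (Real.cosh (t * b))
        filter_upwards [h2, h3, hmds m hm] with ω e2 e3 e5
        rw [e2]
        simp only [Pi.add_apply, Pi.smul_apply, smul_eq_mul]
        rw [congrFun h4 ω, e3]
        simp only [Pi.smul_apply, smul_eq_mul, e5, Pi.zero_apply, mul_zero, add_zero, le_refl]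
      rw [hXY]
      have hmm : m + 1 - 1 = (m - 1) + 1 := by omega
      rw [hmm, pow_succ]
      calc ∫ ω, X ω * Y ω ∂μ = ∫ ω, (μ[X * Y| F m]) ω ∂μ :=
            (integral_condExp (F.le m)).symm
        _ = ∫ ω, X ω * (μ[Y| F m]) ω ∂μ := by
            refine integral_congr_ae ?_
            filter_upwards [hpull] with ω h
            rw [h]; rfl
        _ ≤ ∫ ω, X ω * Real.cosh (t * b) ∂μ := by
            refine integral_mono_ae (integrable_condExp.congr hpull) (hXint.mul_const _) ?_
            filter_upwards [hcondY] with ω h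
            exact mul_le_mul_of_nonneg_left h (Real.exp_pos _).le
        _ = (∫ ω, X ω ∂μ) * Real.cosh (t * b) := integral_mul_const _ _
        _ ≤ Real.cosh (t * b) ^ (m - 1) * Real.cosh (t * b) :=
            mul_le_mul_of_nonneg_right (ih (by omega)) (Real.cosh_pos _).le
  exact key n le_rfl

set_option maxHeartbeats 1000000 in
lemma aux_one_side {Ω : Type*} {m0 : MeasurableSpace Ω} (μ : Measure Ω) [IsProbabilityMeasure μ]
    (F : Filtration ℕ m0) (ψ : ℕ → Ω → ℝ) (C δ : ℝ) (hC : 0 < C)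
    (hδ0 : 0 < δ) (hδ1 : δ ≤ 1 / 6)
    (hadapted : ∀ k, 1 ≤ k → StronglyMeasurable[F k] (ψ k))
    (hmds : ∀ k, 1 ≤ k → μ[ψ (k + 1) | F k] =ᵐ[μ] 0)
    (hbound : ∀ k : ℕ, 1 ≤ k → ∀ᵐ ω ∂μ, |ψ k ω| ≤ C / 2 * Real.log (k / δ))
    (n : ℕ) (hn : 2 ≤ n) :
    μ {ω | C * Real.sqrt n * Real.log (n / δ) ^ 2 - C / 2 * Real.log (1 / δ)
        ≤ ∑ i ∈ Finset.Icc 2 n, ψ i ω} ≤ ENNReal.ofReal ((δ / n) ^ 2) := by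
  have hn0 : (0:ℝ) < n := by positivity
  have hn2 : (2:ℝ) ≤ n := by exact_mod_cast hn
  have hsq1 : 1 ≤ Real.sqrt n := by
    rw [show (1:ℝ) = Real.sqrt 1 by simp]
    exact Real.sqrt_le_sqrt (by linarith)
  have hsq0 : 0 < Real.sqrt n := by linarith
  have hnδ : (0:ℝ) < n / δ := by positivity
  have h12 : (12:ℝ) ≤ n / δ := by
    rw [le_div_iff₀ hδ0]
    nlinarith
  set L := Real.log (n / δ) with hLdef
  have hexp2 : Real.exp 2 ≤ 12 := by
    have h1 : Real.exp 2 = Real.exp 1 ^ 2 := by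
      rw [← Real.exp_nat_mul]; norm_num
    have h2 := Real.exp_one_lt_d9
    nlinarith [Real.exp_pos 1]
  have hL2 : 2 ≤ L := by
    rw [hLdef, Real.le_log_iff_exp_le hnδ]
    linarith
  have hL0 : 0 < L := by linarith
  set b := C / 2 * L with hbdef
  have hb : 0 < b := by positivity
  set t := 4 / (C * Real.sqrt n) with htdef
  have ht : 0 < t := by positivity
  set a' := C * Real.sqrt n * L ^ 2 - C / 2 * Real.log (1 / δ) with ha'def
  set T := fun ω => ∑ i ∈ Finset.Icc 2 n, ψ i ω with hTdef
  -- bound hypothesis for the mgf lemma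
  have hbd : ∀ i, 2 ≤ i → i ≤ n → ∀ᵐ ω ∂μ, |ψ i ω| ≤ b := by
    intro i h2i hin
    filter_upwards [hbound i (by omega)] with ω hω
    refine hω.trans ?_
    rw [hbdef]
    have : Real.log (i / δ) ≤ L := by
      rw [hLdef]
      apply Real.log_le_log (by positivity)
      gcongr
    nlinarith
  -- integrability of exp(t*T)
  have hTmeas : AEStronglyMeasurable T μ := by
    refine (Finset.stronglyMeasurable_fun_sum _ fun i hi => ?_).aestronglyMeasurable
    rw [Finset.mem_Icc] at hi
    exact (hadapted i (by omega)).mono (F.le i)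
  have hTbd : ∀ᵐ ω ∂μ, |T ω| ≤ (n : ℝ) * b := by
    have hall : ∀ᵐ ω ∂μ, ∀ i ∈ Finset.Icc 2 n, |ψ i ω| ≤ b := by
      rw [Finset.eventually_all]
      intro i hi
      rw [Finset.mem_Icc] at hi
      exact hbd i hi.1 hi.2
    filter_upwards [hall] with ω hω
    calc |T ω| ≤ ∑ i ∈ Finset.Icc 2 n, |ψ i ω| := Finset.abs_sum_le_sum_abs _ _
      _ ≤ ∑ _i ∈ Finset.Icc 2 n, b := Finset.sum_le_sum hω
      _ = ((Finset.Icc 2 n).card : ℝ) * b := by rw [Finset.sum_const, nsmul_eq_mul]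
      _ ≤ (n : ℝ) * b := by
          apply mul_le_mul_of_nonneg_right _ hb.le
          rw [Nat.card_Icc]
          exact_mod_cast Nat.le_of_lt_succ (by omega)
  have hint : Integrable (fun ω => Real.exp (t * T ω)) μ := aux_int_exp hTmeas hTbd t
  -- Chernoff
  have hcher := measure_ge_le_exp_mul_mgf (μ := μ) (X := T) a' ht.le hint
  -- mgf bound
  have hmgf : mgf T μ t ≤ Real.exp (2 * L ^ 2) := by
    have h1 : mgf T μ t ≤ Real.cosh (t * b) ^ (n - 1) :=
      aux_mgf_bound μ F ψ t hb hadapted hmds n hbd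
    refine h1.trans ?_
    have h2 : Real.cosh (t * b) ^ (n - 1) ≤ Real.exp ((t * b) ^ 2 / 2) ^ (n - 1) :=
      pow_le_pow_left₀ (Real.cosh_pos _).le (Real.cosh_le_exp_half_sq _) _
    refine h2.trans ?_
    rw [← Real.exp_nat_mul]
    apply Real.exp_le_exp.2
    have htb : t * b = 2 * L / Real.sqrt n := by
      rw [htdef, hbdef]
      field_simp
      ring
    have hsqn : Real.sqrt n ^ 2 = n := Real.sq_sqrt hn0.le
    have hcast : ((n - 1 : ℕ) : ℝ) ≤ (n : ℝ) := by
      exact_mod_cast Nat.sub_le n 1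
    have hval : (t * b) ^ 2 / 2 = 2 * L ^ 2 / n := by
      rw [htb]
      rw [div_pow, hsqn]
      ring
    rw [hval]
    calc ((n-1:ℕ):ℝ) * (2 * L ^ 2 / n) ≤ n * (2 * L ^ 2 / n) :=
          mul_le_mul_of_nonneg_right hcast (by positivity)
      _ = 2 * L ^ 2 := by field_simp
  -- numeric exponent bound
  have hlog1δ : 0 ≤ Real.log (1 / δ) ∧ Real.log (1 / δ) ≤ L := by
    constructor
    · apply Real.log_nonneg
      rw [le_div_iff₀ hδ0]; linarith
    · apply Real.log_le_log (by positivity)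
      gcongr
      linarith
  have hta' : 4 * L ^ 2 - 2 * L ≤ t * a' := by
    rw [htdef, ha'def]
    have hX : 4 / (C * Real.sqrt n) * (C * Real.sqrt n * L ^ 2 - C / 2 * Real.log (1 / δ))
        = 4 * L ^ 2 - 2 * Real.log (1 / δ) / Real.sqrt n := by
      field_simp
      ring
    rw [hX]
    have h2' : 2 * Real.log (1 / δ) / Real.sqrt n ≤ 2 * L := by
      rw [mul_div_assoc]
      have : Real.log (1 / δ) / Real.sqrt n ≤ L := by
        rw [div_le_iff₀ hsq0]
        nlinarith [hlog1δ.1, hlog1δ.2]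
      linarith
    linarith
  have hfinal : Real.exp (-t * a') * Real.exp (2 * L ^ 2) ≤ (δ / n) ^ 2 := by
    rw [← Real.exp_add]
    have hexpval : (δ / n) ^ 2 = Real.exp (-(2 * L)) := by
      have hdn : (0:ℝ) < δ / n := by positivity
      have : Real.log ((δ / n) ^ 2) = -(2 * L) := by
        rw [Real.log_pow, hLdef]
        push_cast
        rw [show δ / (n:ℝ) = ((n:ℝ) / δ)⁻¹ by rw [inv_div], Real.log_inv]
        ring
      rw [← this, Real.exp_log (by positivity)]
    rw [hexpval]
    apply Real.exp_le_exp.2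
    nlinarith
  -- combine
  rw [ENNReal.le_ofReal_iff_toReal_le (measure_ne_top μ _) (by positivity)]
  refine hcher.trans ?_
  calc Real.exp (-t * a') * mgf T μ t ≤ Real.exp (-t * a') * Real.exp (2 * L ^ 2) :=
        mul_le_mul_of_nonneg_left hmgf (Real.exp_pos _).le
    _ ≤ (δ / n) ^ 2 := hfinal


/-- If `(φ k)_{k ≥ 1}` is a martingale difference sequence adapted to the filtration `(F k)`,
`C > 0`, `0 < δ ≤ 1/6`, and `|φ k| ≤ (C/2) log(k/δ)` a.s. for every `k ≥ 1`, then with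
probability at least `1 - 4δ`, for every positive integer `k`,
`|∑_{i=1}^k φ i| ≤ C √k (log(k/δ))²`. -/
theorem stmt_7 {Ω : Type*} {m0 : MeasurableSpace Ω} (μ : Measure Ω) [IsProbabilityMeasure μ]
    (F : Filtration ℕ m0) (φ : ℕ → Ω → ℝ) (C δ : ℝ) (hC : 0 < C)
    (hδ0 : 0 < δ) (hδ1 : δ ≤ 1 / 6)
    (hadapted : ∀ k, 1 ≤ k → StronglyMeasurable[F k] (φ k))
    (hint : ∀ k, 1 ≤ k → Integrable (φ k) μ)
    (hmds : ∀ k, 1 ≤ k → μ[φ (k + 1) | F k] =ᵐ[μ] 0)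
    (hbound : ∀ k : ℕ, 1 ≤ k → ∀ᵐ ω ∂μ, |φ k ω| ≤ C / 2 * Real.log (k / δ)) :
    1 - 4 * δ ≤ (μ {ω | ∀ k : ℕ, 1 ≤ k →
        |∑ i ∈ Finset.Icc 1 k, φ i ω| ≤
          C * Real.sqrt k * Real.log (k / δ) ^ 2}).toReal := by
  classical
  set A : ℕ → Set Ω := fun k => {ω | |∑ i ∈ Finset.Icc 1 k, φ i ω| ≤
    C * Real.sqrt k * Real.log (k / δ) ^ 2} with hAdef
  set E : Set Ω := {ω | ∀ k : ℕ, 1 ≤ k → ω ∈ A k} with hEdef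
  have hgoal : {ω | ∀ k : ℕ, 1 ≤ k → |∑ i ∈ Finset.Icc 1 k, φ i ω| ≤
      C * Real.sqrt k * Real.log (k / δ) ^ 2} = E := rfl
  rw [hgoal]
  have hSmeas : ∀ k : ℕ, Measurable (fun ω => ∑ i ∈ Finset.Icc 1 k, φ i ω) := by
    intro k
    apply Finset.measurable_sum
    intro i hi
    rw [Finset.mem_Icc] at hi
    exact ((hadapted i hi.1).mono (F.le i)).measurable
  have hAmeas : ∀ k, MeasurableSet (A k) := fun k =>
    measurableSet_le (hSmeas k).abs measurable_const
  have hEmeas : MeasurableSet E := by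
    have : E = ⋂ k, ⋂ (_ : 1 ≤ k), A k := by
      ext ω; simp [hEdef, Set.mem_iInter]
    rw [this]
    exact MeasurableSet.iInter fun k => MeasurableSet.iInter fun _ => hAmeas k
  have hδ0' : (0:ℝ) < 1/δ := by positivity
  have h6 : (6:ℝ) ≤ 1/δ := by rw [le_div_iff₀ hδ0]; linarith
  have hlog1 : 1 ≤ Real.log (1/δ) := by
    rw [Real.le_log_iff_exp_le hδ0']
    have := Real.exp_one_lt_d9
    linarith
  have hb1 : ∀ᵐ ω ∂μ, |φ 1 ω| ≤ C/2 * Real.log (1/δ) := by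
    have := hbound 1 le_rfl
    simpa using this
  -- k = 1 holds a.s.
  have hA1 : μ (A 1)ᶜ = 0 := by
    have hae : ∀ᵐ ω ∂μ, ω ∈ A 1 := by
      filter_upwards [hb1] with ω h1
      simp only [hAdef, Set.mem_setOf_eq, Finset.Icc_self, Finset.sum_singleton,
        Nat.cast_one, Real.sqrt_one]
      nlinarith [abs_nonneg (φ 1 ω)]
    exact ae_iff.mp hae
  -- tail bound for k ≥ 2
  have hAk : ∀ k : ℕ, 2 ≤ k → μ (A k)ᶜ ≤ ENNReal.ofReal (2 * (δ/(k:ℝ))^2) := by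
    intro k hk
    set a' : ℝ := C * Real.sqrt k * Real.log (k/δ)^2 - C/2 * Real.log (1/δ) with ha'
    set S1 : Set Ω := {ω | a' ≤ ∑ i ∈ Finset.Icc 2 k, φ i ω} with hS1
    set S2 : Set Ω := {ω | a' ≤ ∑ i ∈ Finset.Icc 2 k, (fun j => -φ j) i ω} with hS2
    set N : Set Ω := {ω | ¬ |φ 1 ω| ≤ C/2 * Real.log (1/δ)} with hNdef
    have hN : μ N = 0 := ae_iff.mp hb1
    have hsplit : ∀ ω, ∑ i ∈ Finset.Icc 1 k, φ i ω
        = φ 1 ω + ∑ i ∈ Finset.Icc 2 k, φ i ω := by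
      intro ω
      rw [show Finset.Icc 1 k = insert 1 (Finset.Icc 2 k) from by
        ext x; simp only [Finset.mem_Icc, Finset.mem_insert]; omega]
      rw [Finset.sum_insert (by simp [Finset.mem_Icc])]
    have hsub : (A k)ᶜ ⊆ S1 ∪ S2 ∪ N := by
      intro ω hω
      by_cases hωN : ω ∈ N
      · exact Or.inr hωN
      refine Or.inl ?_
      rw [hNdef, Set.mem_setOf_eq, not_not] at hωN
      rw [Set.mem_compl_iff, hAdef, Set.mem_setOf_eq, not_le] at hω
      have habs : |∑ i ∈ Finset.Icc 1 k, φ i ω|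
          ≤ |φ 1 ω| + |∑ i ∈ Finset.Icc 2 k, φ i ω| := by
        rw [hsplit ω]; exact abs_add_le _ _
      have hT : a' ≤ |∑ i ∈ Finset.Icc 2 k, φ i ω| := by
        rw [ha']; linarith
      rcases le_abs.mp hT with h | h
      · exact Or.inl h
      · refine Or.inr ?_
        rw [hS2, Set.mem_setOf_eq]
        simpa [Finset.sum_neg_distrib] using h
    have hadapted' : ∀ j, 1 ≤ j → StronglyMeasurable[F j] ((fun j => -φ j) j) :=
      fun j hj => (hadapted j hj).neg
    have hmds' : ∀ j, 1 ≤ j → μ[(fun j => -φ j) (j+1) | F j] =ᵐ[μ] 0 := by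
      intro j hj
      refine (condExp_neg (φ (j+1)) (F j)).trans ?_
      filter_upwards [hmds j hj] with ω h
      simp [h]
    have hbound' : ∀ j : ℕ, 1 ≤ j → ∀ᵐ ω ∂μ, |(fun j => -φ j) j ω| ≤ C/2 * Real.log (j/δ) := by
      intro j hj
      filter_upwards [hbound j hj] with ω h
      simpa using h
    have h1 := aux_one_side μ F φ C δ hC hδ0 hδ1 hadapted hmds hbound k hk
    have h2 := aux_one_side μ F (fun j => -φ j) C δ hC hδ0 hδ1 hadapted' hmds' hbound' k hk
    calc μ (A k)ᶜ ≤ μ (S1 ∪ S2 ∪ N) := measure_mono hsub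
      _ ≤ μ (S1 ∪ S2) + μ N := measure_union_le _ _
      _ = μ (S1 ∪ S2) := by rw [hN, add_zero]
      _ ≤ μ S1 + μ S2 := measure_union_le _ _
      _ ≤ ENNReal.ofReal ((δ/(k:ℝ))^2) + ENNReal.ofReal ((δ/(k:ℝ))^2) := add_le_add h1 h2
      _ = ENNReal.ofReal (2 * (δ/(k:ℝ))^2) := by
          rw [← ENNReal.ofReal_add (by positivity) (by positivity)]
          ring_nf
  -- union bound
  have hsub2 : Eᶜ ⊆ (A 1)ᶜ ∪ ⋃ j : ℕ, (A (j+2))ᶜ := by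
    intro ω hω
    rw [hEdef, Set.mem_compl_iff, Set.mem_setOf_eq] at hω
    push_neg at hω
    obtain ⟨k, hk1, hk⟩ := hω
    rcases Nat.lt_or_ge k 2 with h2 | h2
    · have : k = 1 := by omega
      subst this
      exact Or.inl hk
    · refine Or.inr (Set.mem_iUnion.mpr ⟨k - 2, ?_⟩)
      have : k - 2 + 2 = k := by omega
      rw [this]
      exact hk
  have hμEc : μ Eᶜ ≤ ENNReal.ofReal (4*δ) := by
    calc μ Eᶜ ≤ μ ((A 1)ᶜ ∪ ⋃ j : ℕ, (A (j+2))ᶜ) := measure_mono hsub2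
      _ ≤ μ (A 1)ᶜ + μ (⋃ j : ℕ, (A (j+2))ᶜ) := measure_union_le _ _
      _ = μ (⋃ j : ℕ, (A (j+2))ᶜ) := by rw [hA1, zero_add]
      _ ≤ ∑' j : ℕ, μ (A (j+2))ᶜ := measure_iUnion_le _
      _ ≤ ∑' j : ℕ, ENNReal.ofReal (2 * (δ/((j+2:ℕ):ℝ))^2) :=
          ENNReal.tsum_le_tsum fun j => hAk (j+2) (by omega)
      _ ≤ ENNReal.ofReal (2*δ^2) := by
          rw [ENNReal.tsum_eq_iSup_sum]
          apply iSup_le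
          intro s
          rw [← ENNReal.ofReal_sum_of_nonneg (fun i _ => by positivity)]
          apply ENNReal.ofReal_le_ofReal
          obtain ⟨M, hsM⟩ := Finset.exists_nat_subset_range s
          have step1 : ∑ j ∈ s, 2 * (δ/((j+2:ℕ):ℝ))^2
              ≤ ∑ j ∈ Finset.range M, 2 * (δ/((j+2:ℕ):ℝ))^2 :=
            Finset.sum_le_sum_of_subset_of_nonneg hsM (fun i _ _ => by positivity)
          refine step1.trans ?_
          have step2 : ∀ j : ℕ, 2 * (δ/((j+2:ℕ):ℝ))^2
              ≤ 2*δ^2 * (1/((j:ℝ)+1) - 1/((j:ℝ)+2)) := by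
            intro j
            have hj0 : (0:ℝ) < (j:ℝ)+1 := by positivity
            have hj2 : (0:ℝ) < (j:ℝ)+2 := by positivity
            have hcast : ((j+2:ℕ):ℝ) = (j:ℝ)+2 := by push_cast; ring
            have key : (1:ℝ)/((j:ℝ)+2)^2 ≤ 1/((j:ℝ)+1) - 1/((j:ℝ)+2) := by
              rw [div_sub_div _ _ hj0.ne' hj2.ne', div_le_div_iff₀ (by positivity) (by positivity)]
              nlinarith
            calc 2 * (δ/((j+2:ℕ):ℝ))^2 = 2*δ^2 * (1/((j:ℝ)+2)^2) := by
                  rw [hcast, div_pow]; ring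
              _ ≤ 2*δ^2 * (1/((j:ℝ)+1) - 1/((j:ℝ)+2)) :=
                  mul_le_mul_of_nonneg_left key (by positivity)
          refine (Finset.sum_le_sum fun j _ => step2 j).trans ?_
          rw [← Finset.mul_sum]
          have htel : ∑ j ∈ Finset.range M, (1/((j:ℝ)+1) - 1/((j:ℝ)+2))
              = 1/((0:ℝ)+1) - 1/((M:ℝ)+1) := by
            have h := Finset.sum_range_sub' (fun m : ℕ => 1/((m:ℝ)+1)) M
            simp only [Nat.cast_add, Nat.cast_one, Nat.cast_zero] at h
            rw [← h]
            apply Finset.sum_congr rfl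
            intro j _
            ring
          rw [htel]
          have hM0 : (0:ℝ) ≤ 1/((M:ℝ)+1) := by positivity
          nlinarith [sq_nonneg δ]
      _ ≤ ENNReal.ofReal (4*δ) := by
          apply ENNReal.ofReal_le_ofReal
          nlinarith
  have h1 : (μ Eᶜ).toReal ≤ 4*δ :=
    (ENNReal.le_ofReal_iff_toReal_le (measure_ne_top μ _) (by positivity)).1 hμEc
  have h2 : μ E + μ Eᶜ = 1 := by
    rw [measure_add_measure_compl hEmeas, measure_univ]
  have h3 : (μ E).toReal + (μ Eᶜ).toReal = 1 := by
    rw [← ENNReal.toReal_add (measure_ne_top μ _) (measure_ne_top μ _), h2, ENNReal.toReal_one]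
  linarith
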